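/- Assume Ω is finitely connected at the boundary. Then every prime chain in Ω has a singleton impression, and every point x ∈ ∂Ω is accessible and is the impression of some prime chain. -/

import Mathlib

open Metric Set Filter Topology

/-- The distance between two subsets of a metric space
(infimum of pairwise distances, with `sInf ∅ = 0`). -/
noncomputable def setDist {X : Type*} [MetricSpace X] (A B : Set X) : ℝ :=
  sInf {d : ℝ | ∃ a ∈ A, ∃ b ∈ B, d = dist a b}

/-- `Ω` is a bounded domain: bounded, nonempty, open, connected, and not all of `X`. -/
def BoundedDomain {X : Type*} [MetricSpace X] (Ω : Set X) : Prop :=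
  IsOpen Ω ∧ IsConnected Ω ∧ Bornology.IsBounded Ω ∧ Ω ≠ Set.univ

/-- An acceptable set: a bounded connected set `E ⊊ Ω` whose closure meets `∂Ω`. -/
def Acceptable {X : Type*} [MetricSpace X] (Ω E : Set X) : Prop :=
  Bornology.IsBounded E ∧ IsConnected E ∧ E ⊆ Ω ∧ E ≠ Ω ∧
    (closure E ∩ frontier Ω).Nonempty

/-- A chain in `Ω`: a nested sequence of acceptable sets whose consecutive
relative boundaries are at positive distance and whose impression
`⋂ k, closure (E k)` lies in `∂Ω`. -/
def IsChainIn {X : Type*} [MetricSpace X] (Ω : Set X) (E : ℕ → Set X) : Prop :=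
  (∀ k, Acceptable Ω (E k)) ∧
  (∀ k, E (k + 1) ⊆ E k) ∧
  (∀ k, 0 < setDist (Ω ∩ frontier (E (k + 1))) (Ω ∩ frontier (E k))) ∧
  (⋂ k, closure (E k)) ⊆ frontier Ω

/-- A chain `E` divides a chain `F` if each `F k` contains some `E l`. -/
def Divides {X : Type*} (E F : ℕ → Set X) : Prop := ∀ k, ∃ l, E l ⊆ F k

/-- Two chains are equivalent if each divides the other. -/
def EquivChains {X : Type*} (E F : ℕ → Set X) : Prop := Divides E F ∧ Divides F E

/-- A prime chain: a chain such that every chain dividing it is equivalent to it. -/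
def IsPrimeChain {X : Type*} [MetricSpace X] (Ω : Set X) (E : ℕ → Set X) : Prop :=
  IsChainIn Ω E ∧ ∀ F : ℕ → Set X, IsChainIn Ω F → Divides F E → EquivChains F E

/-- A boundary point `x` is accessible if some curve in `Ω` ends at `x`. -/
def Accessible {X : Type*} [MetricSpace X] (Ω : Set X) (x : X) : Prop :=
  ∃ γ : ℝ → X, ContinuousOn γ (Set.Icc 0 1) ∧ γ 1 = x ∧ γ '' Set.Ico 0 1 ⊆ Ω

/-- `Ω` is finitely connected at `x₀` if each ball around `x₀` contains an open
neighborhood `G` of `x₀` such that `G ∩ Ω` has finitely many components. -/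
def FinitelyConnectedAt {X : Type*} [MetricSpace X] (Ω : Set X) (x₀ : X) : Prop :=
  ∀ r : ℝ, 0 < r → ∃ G : Set X, IsOpen G ∧ x₀ ∈ G ∧ G ⊆ Metric.ball x₀ r ∧
    {C : Set X | ∃ y ∈ G ∩ Ω, C = connectedComponentIn (G ∩ Ω) y}.Finite

section PE
variable {X : Type*} [MetricSpace X]

theorem pe_setDist_le {A B : Set X} {a b : X} (ha : a ∈ A) (hb : b ∈ B) :
    setDist A B ≤ dist a b :=
  csInf_le ⟨0, by rintro d ⟨a', _, b', _, rfl⟩; exact dist_nonneg⟩ ⟨a, ha, b, hb, rfl⟩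

theorem pe_le_setDist {A B : Set X} {c : ℝ} (hA : A.Nonempty) (hB : B.Nonempty)
    (h : ∀ a ∈ A, ∀ b ∈ B, c ≤ dist a b) : c ≤ setDist A B := by
  apply le_csInf
  · obtain ⟨a, ha⟩ := hA; obtain ⟨b, hb⟩ := hB; exact ⟨dist a b, a, ha, b, hb, rfl⟩
  · rintro d ⟨a, ha, b, hb, rfl⟩; exact h a ha b hb

theorem pe_connected_frontier {s t : Set X} (hs : IsPreconnected s)
    (h1 : (s ∩ t).Nonempty) (h2 : (s \ t).Nonempty) : (s ∩ frontier t).Nonempty := by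
  by_contra hemp
  push_neg at hemp

  have hsub : s ⊆ interior t ∪ (closure t)ᶜ := by
    intro z hz
    have hzf : z ∉ frontier t := fun hf => (Set.eq_empty_iff_forall_notMem.1 hemp z ⟨hz, hf⟩)
    by_cases hzc : z ∈ closure t
    · left; by_contra hi; exact hzf ⟨hzc, hi⟩
    · exact Or.inr hzc
  have hU : (s ∩ interior t).Nonempty := by
    obtain ⟨z, hzs, hzt⟩ := h1
    refine ⟨z, hzs, ?_⟩
    have hzf : z ∉ frontier t := fun hf => (Set.eq_empty_iff_forall_notMem.1 hemp z ⟨hzs, hf⟩)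
    by_contra hi; exact hzf ⟨subset_closure hzt, hi⟩
  have hV : (s ∩ (closure t)ᶜ).Nonempty := by
    obtain ⟨z, hzs, hzt⟩ := h2
    refine ⟨z, hzs, fun hzc => ?_⟩
    have hzf : z ∉ frontier t := fun hf => (Set.eq_empty_iff_forall_notMem.1 hemp z ⟨hzs, hf⟩)
    refine hzt (interior_subset ?_)
    by_contra hi; exact hzf ⟨hzc, hi⟩
  obtain ⟨z, _, hzi, hzc⟩ := hs (interior t) (closure t)ᶜ isOpen_interior (isClosed_closure.isOpen_compl) hsub hU hV
  exact hzc (subset_closure (interior_subset hzi))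

theorem pe_frontier_nonempty {Ω C : Set X} (hΩo : IsOpen Ω) (hΩc : IsPreconnected Ω)
    (hCo : IsOpen C) (hne : C.Nonempty) (hsub : C ⊆ Ω) (hneq : C ≠ Ω) :
    (Ω ∩ frontier C).Nonempty := by
  by_contra hemp
  push_neg at hemp

  have hclosed : closure C ∩ Ω ⊆ C := by
    intro z ⟨hzc, hzo⟩
    by_cases hz : z ∈ C
    · exact hz
    · exact absurd ⟨hzo, hzc, by simpa [hCo.interior_eq] using hz⟩
        (Set.eq_empty_iff_forall_notMem.1 hemp z)
  have hcover : Ω ⊆ C ∪ (closure C)ᶜ := by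
    intro z hz
    by_cases hzc : z ∈ closure C
    · exact Or.inl (hclosed ⟨hzc, hz⟩)
    · exact Or.inr hzc
  have hV : (Ω ∩ (closure C)ᶜ).Nonempty := by
    by_contra hV
    push_neg at hV

    apply hneq
    apply Set.Subset.antisymm hsub
    intro z hz
    have : z ∈ closure C := by
      by_contra hzc
      exact (Set.eq_empty_iff_forall_notMem.1 hV z) ⟨hz, hzc⟩
    exact hclosed ⟨this, hz⟩
  obtain ⟨z, _, hz1, hz2⟩ := hΩc C (closure C)ᶜ hCo isClosed_closure.isOpen_compl hcover
    (hne.elim fun c hc => ⟨c, hsub hc, hc⟩)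
    hV
  exact hz2 (subset_closure hz1)

theorem pe_fiber {α : Type*} {f : ℕ → α} {S : Set α} (hS : S.Finite) (hf : ∀ n, f n ∈ S) :
    ∃ C ∈ S, {n | f n = C}.Infinite := by
  by_contra h
  push_neg at h
  have : (Set.univ : Set ℕ) ⊆ ⋃ C ∈ S, {n | f n = C} := by
    intro n _; exact Set.mem_biUnion (hf n) rfl
  have hfin : (⋃ C ∈ S, {n | f n = C}).Finite := by
    apply Set.Finite.biUnion hS
    intro C hC
    rcases h C hC with hfin
    exact hfin
  exact Set.infinite_univ (Set.Finite.subset hfin this)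

theorem pe_antitone_select {α : Type*} {S : Set α} (hS : S.Finite) (P : ℕ → α → Prop)
    (hanti : ∀ k C, P (k + 1) C → P k C) (hex : ∀ k, ∃ C ∈ S, P k C) :
    ∃ C ∈ S, ∀ k, P k C := by
  choose f hf1 hf2 using hex
  obtain ⟨C, hCS, hinf⟩ := pe_fiber hS hf1
  refine ⟨C, hCS, fun k => ?_⟩
  obtain ⟨m, hm, hkm⟩ := hinf.exists_gt k
  have hdesc : ∀ i C, P (k + i) C → P k C := by
    intro i
    induction i with
    | zero => exact fun C h => h
    | succ n ih => exact fun C h => ih C (hanti (k+n) C (by rwa [Nat.add_succ] at h))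
  have := hf2 m
  rw [hm] at this
  exact hdesc (m - k) C (by rwa [Nat.add_sub_cancel' hkm.le])

theorem pe_closure_componentIn {F : Set X} {y : X} :
    closure (connectedComponentIn F y) ∩ F ⊆ connectedComponentIn F y := by
  rintro z ⟨hzc, hzF⟩
  rcases Set.eq_empty_or_nonempty (connectedComponentIn F y) with he | ⟨c, hc⟩
  · rw [he] at hzc; simp at hzc
  have hyF : y ∈ F := connectedComponentIn_nonempty_iff.mp ⟨c, hc⟩
  have hpre : IsPreconnected (connectedComponentIn F y ∪ {z}) := by
    apply IsPreconnected.subset_closure (isPreconnected_connectedComponentIn)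
      Set.subset_union_left
    intro w hw
    rcases hw with hw | hw
    · exact subset_closure hw
    · rw [Set.mem_singleton_iff] at hw; subst hw; exact hzc
  have := hpre.subset_connectedComponentIn (x := y)
    (Or.inl (mem_connectedComponentIn hyF))
    (Set.union_subset (connectedComponentIn_subset F y) (by simpa using hzF))
  exact this (Or.inr rfl)

theorem pe_sub_component {F F' C : Set X} {y z : X} (hF : F' ⊆ F)
    (hC : C = connectedComponentIn F y) (hz : z ∈ C)
    (D : Set X) (hD : IsPreconnected D) (hzD : z ∈ D) (hDF : D ⊆ F') : D ⊆ C := by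
  subst hC
  rw [connectedComponentIn_eq hz]
  exact hD.subset_connectedComponentIn hzD (hDF.trans hF)

theorem pe_small_nbhd [LocallyConnectedSpace X] {U : Set X} {b : X} (hU : IsOpen U)
    (hb : b ∈ U) {ε : ℝ} (hε : 0 < ε) :
    ∃ D : Set X, b ∈ D ∧ IsOpen D ∧ IsPreconnected D ∧ D ⊆ ball b ε ∧ closure D ⊆ U := by
  obtain ⟨t, ht, htU⟩ := Metric.isOpen_iff.mp hU b hb
  set s := min (t / 2) (ε / 2) with hs
  have hs0 : 0 < s := lt_min (by linarith) (by linarith)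
  refine ⟨connectedComponentIn (ball b s) b, mem_connectedComponentIn (mem_ball_self hs0),
    isOpen_ball.connectedComponentIn, isPreconnected_connectedComponentIn, ?_, ?_⟩
  · exact (connectedComponentIn_subset _ _).trans
      (ball_subset_ball (le_trans (min_le_right (t/2) (ε/2)) (by linarith)))
  · refine (closure_mono (connectedComponentIn_subset _ _)).trans ?_
    refine (closure_ball_subset_closedBall).trans ?_
    refine (closedBall_subset_ball ?_).trans htU
    calc s ≤ t / 2 := min_le_left _ _
    _ < t := by linarith

theorem pe_chain_antitone {Ω : Set X} {F : ℕ → Set X} (h : IsChainIn Ω F) :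
    ∀ {i j : ℕ}, i ≤ j → F j ⊆ F i := by
  intro i j hij
  exact antitone_nat_of_succ_le (f := F) h.2.1 hij

theorem pe_prime_of_small {Ω : Set X} {E : ℕ → Set X} (hch : IsChainIn Ω E)
    (x : X) (ρ : ℕ → ℝ) (hsub : ∀ n, E n ⊆ ball x (ρ n))
    (hρ : ∀ δ : ℝ, 0 < δ → ∃ n, 2 * ρ n < δ) : IsPrimeChain Ω E := by
  refine ⟨hch, fun F hchF hdiv => ⟨hdiv, fun k => ?_⟩⟩
  set δ := setDist (Ω ∩ frontier (F (k + 1))) (Ω ∩ frontier (F k)) with hδ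
  have hδpos : 0 < δ := hchF.2.2.1 k
  obtain ⟨l, hl⟩ := hρ δ hδpos
  refine ⟨l, ?_⟩
  by_contra hne
  obtain ⟨i, hi⟩ := hdiv l
  set j := max i (k + 1) with hj
  have hFj1 : F j ⊆ E l := (pe_chain_antitone hchF (le_max_left _ _)).trans hi
  have hFj2 : F j ⊆ F (k + 1) := pe_chain_antitone hchF (le_max_right _ _)
  obtain ⟨p, hp⟩ := (hchF.1 j).2.1.nonempty
  have hconn : IsPreconnected (E l) := (hch.1 l).2.1.isPreconnected
  have hsubΩ : E l ⊆ Ω := (hch.1 l).2.2.1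
  have hne1 : (E l \ F (k + 1)).Nonempty := by
    rcases Set.not_subset.mp (fun hsub' => hne (hsub'.trans (hchF.2.1 k))) with ⟨z, hz1, hz2⟩
    exact ⟨z, hz1, hz2⟩
  have hne2 : (E l \ F k).Nonempty := by
    rcases Set.not_subset.mp hne with ⟨z, hz1, hz2⟩
    exact ⟨z, hz1, hz2⟩
  obtain ⟨a, haE, haf⟩ := pe_connected_frontier hconn ⟨p, hFj1 hp, hFj2 hp⟩ hne1
  obtain ⟨b, hbE, hbf⟩ := pe_connected_frontier hconn ⟨p, hFj1 hp, (hchF.2.1 k) (hFj2 hp)⟩ hne2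
  have hdab : δ ≤ dist a b := pe_setDist_le ⟨hsubΩ haE, haf⟩ ⟨hsubΩ hbE, hbf⟩
  have : dist a b < 2 * ρ l := by
    have h1 := mem_ball.mp (hsub l haE)
    have h2 := mem_ball.mp (hsub l hbE)
    calc dist a b ≤ dist a x + dist x b := dist_triangle _ _ _
    _ < ρ l + ρ l := by rw [dist_comm x b]; exact add_lt_add h1 h2
    _ = 2 * ρ l := by ring
  linarith

/-- Selection of a good component. -/
theorem pe_select {Ω G' : Set X} {x : X} {ε' : ℝ} (hε' : 0 < ε')
    (hball : ball x ε' ⊆ G')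
    (hfin : {C : Set X | ∃ y ∈ G' ∩ Ω, C = connectedComponentIn (G' ∩ Ω) y}.Finite)
    (T : ℕ → Set X) (hTsub : ∀ k, T k ⊆ Ω) (hTanti : ∀ k, T (k + 1) ⊆ T k)
    (hTx : ∀ k, x ∈ closure (T k)) :
    ∃ C', (∃ y ∈ G' ∩ Ω, C' = connectedComponentIn (G' ∩ Ω) y) ∧
      ∀ k, x ∈ closure (C' ∩ T k) := by
  have hex : ∀ k, ∃ C ∈ {C : Set X | ∃ y ∈ G' ∩ Ω, C = connectedComponentIn (G' ∩ Ω) y},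
      x ∈ closure (C ∩ T k) := by
    intro k
    have hz : ∀ j : ℕ, ∃ z ∈ T k, dist x z < min ε' (1 / (j + 1)) := by
      intro j
      exact Metric.mem_closure_iff.mp (hTx k) _ (lt_min hε' (by positivity))
    choose z hz1 hz2 using hz
    have hzG : ∀ j, z j ∈ G' ∩ Ω := by
      intro j
      exact ⟨hball (mem_ball'.mpr ((hz2 j).trans_le (min_le_left _ _))), hTsub k (hz1 j)⟩
    obtain ⟨C, hCS, hinf⟩ := pe_fiber (f := fun j => connectedComponentIn (G' ∩ Ω) (z j))
      hfin (fun j => ⟨z j, hzG j, rfl⟩)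
    refine ⟨C, hCS, Metric.mem_closure_iff.mpr fun r hr => ?_⟩
    obtain ⟨N, hN⟩ := exists_nat_gt (1 / r)
    obtain ⟨j, hjC, hjN⟩ := hinf.exists_gt N
    refine ⟨z j, ⟨?_, hz1 j⟩, ?_⟩
    · rw [← hjC]; exact mem_connectedComponentIn (hzG j)
    · refine (hz2 j).trans_le ((min_le_right _ _).trans ?_)
      rw [div_le_iff₀ (by positivity)]
      rw [div_lt_iff₀ hr] at hN
      have hNj : (N : ℝ) ≤ (j : ℝ) + 1 := by exact_mod_cast (hjN.le.trans (Nat.le_succ j))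
      nlinarith [hN, hr.le, hNj]
  have hanti : ∀ (k : ℕ) (C : Set X), x ∈ closure (C ∩ T (k + 1)) → x ∈ closure (C ∩ T k) :=
    fun k C h => closure_mono (Set.inter_subset_inter_right _ (hTanti k)) h
  obtain ⟨C, hCS, hC⟩ := pe_antitone_select hfin _ hanti hex
  exact ⟨C, hCS, hC⟩


structure PeSt (X : Type*) [MetricSpace X] where
  C : Set X
  G : Set X
  eps : ℝ
  rho : ℝ

def PeInv (Ω : Set X) (x ω : X) (W : ℕ → Set X) (p : PeSt X) : Prop :=
  0 < p.eps ∧ p.eps ≤ p.rho ∧ p.rho ≤ dist x ω / 2 ∧ ball x p.eps ⊆ p.G ∧ IsOpen p.G ∧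
  p.G ⊆ ball x p.rho ∧ (∃ y ∈ p.G ∩ Ω, p.C = connectedComponentIn (p.G ∩ Ω) y) ∧
  (∀ k, x ∈ closure (p.C ∩ W k))

theorem pe_tower [LocallyConnectedSpace X] {Ω : Set X} (hΩo : IsOpen Ω)
    (hΩc : IsPreconnected Ω) {x ω : X} (hx : x ∈ frontier Ω) (hω : ω ∈ Ω)
    (hfc : FinitelyConnectedAt Ω x)
    (W : ℕ → Set X) (hWsub : ∀ k, W k ⊆ Ω) (hWanti : ∀ k, W (k + 1) ⊆ W k)
    (hWx : ∀ k, x ∈ closure (W k)) :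
    ∃ (C : ℕ → Set X) (ρ : ℕ → ℝ),
      (∀ n, IsOpen (C n)) ∧ (∀ n, IsConnected (C n)) ∧ (∀ n, C n ⊆ Ω) ∧
      (∀ n, C (n + 1) ⊆ C n) ∧ (∀ n k, x ∈ closure (C n ∩ W k)) ∧
      (∀ n, 0 < ρ n) ∧ (∀ n, ρ n ≤ dist x ω / 2 * (1 / 2) ^ n) ∧
      (∀ n, C n ⊆ ball x (ρ n)) ∧ (∀ n, C n ≠ Ω) ∧
      (∀ n, 0 < setDist (Ω ∩ frontier (C (n + 1))) (Ω ∩ frontier (C n))) := by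
  have hxΩ : x ∉ Ω := by
    intro h
    exact hx.2 (by rwa [hΩo.interior_eq])
  have hd : 0 < dist x ω := dist_pos.mpr (fun h => hxΩ (h ▸ hω))
  -- base state
  obtain ⟨G0, hG0o, hxG0, hG0sub, hfin0⟩ := hfc (dist x ω / 2) (by linarith)
  obtain ⟨t0, ht0, ht0sub⟩ := Metric.isOpen_iff.mp hG0o x hxG0
  obtain ⟨C0, hC0mem, hC0cl⟩ := pe_select (Ω := Ω) (x := x)
    (lt_min ht0 (by linarith : (0:ℝ) < dist x ω / 2))
    ((ball_subset_ball (min_le_left _ _)).trans ht0sub) hfin0 W hWsub hWanti hWx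
  have h0 : PeInv Ω x ω W ⟨C0, G0, min t0 (dist x ω / 2), dist x ω / 2⟩ :=
    ⟨lt_min ht0 (by linarith), min_le_right _ _, le_refl _,
     (ball_subset_ball (min_le_left _ _)).trans ht0sub, hG0o, hG0sub, hC0mem, hC0cl⟩
  -- step
  have hstep : ∀ p : {p : PeSt X // PeInv Ω x ω W p},
      ∃ q : {p : PeSt X // PeInv Ω x ω W p}, q.1.C ⊆ p.1.C ∧ q.1.rho = p.1.eps / 2 := by
    rintro ⟨p, hp⟩
    obtain ⟨hε, hερ, hρd, hball, hGo, hGsub, ⟨y, hy, hCeq⟩, hCcl⟩ := hp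
    obtain ⟨G', hG'o, hxG', hG'sub, hfin'⟩ := hfc (p.eps / 2) (by linarith)
    obtain ⟨t', ht', ht'sub⟩ := Metric.isOpen_iff.mp hG'o x hxG'
    have hG'G : G' ⊆ p.G := by
      refine hG'sub.trans ((ball_subset_ball (by linarith)).trans hball)
    obtain ⟨C', hC'mem, hC'cl⟩ := pe_select (Ω := Ω) (x := x)
      (lt_min ht' (by linarith : (0:ℝ) < p.eps / 2))
      ((ball_subset_ball (min_le_left _ _)).trans ht'sub) hfin'
      (fun k => p.C ∩ W k)
      (fun k => (Set.inter_subset_right).trans (hWsub k))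
      (fun k => Set.inter_subset_inter_right _ (hWanti k)) hCcl
    have hC'subC : C' ⊆ p.C := by
      have hne : (C' ∩ (p.C ∩ W 0)).Nonempty := by
        by_contra h
        rw [Set.not_nonempty_iff_eq_empty] at h
        have := hC'cl 0
        rw [h, closure_empty] at this
        exact this
      obtain ⟨z, hz1, hz2, _⟩ := hne
      exact pe_sub_component (Set.inter_subset_inter_left Ω hG'G) hCeq hz2 C'
        (by obtain ⟨y', hy', hC'eq⟩ := hC'mem; rw [hC'eq];
            exact isPreconnected_connectedComponentIn)
        hz1 (by obtain ⟨y', hy', hC'eq⟩ := hC'mem; rw [hC'eq];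
                exact connectedComponentIn_subset _ _)
    refine ⟨⟨⟨C', G', min t' (p.eps / 2), p.eps / 2⟩, ?_⟩, hC'subC, rfl⟩
    exact ⟨lt_min ht' (by linarith), min_le_right _ _, by linarith,
      (ball_subset_ball (min_le_left _ _)).trans ht'sub, hG'o, hG'sub, hC'mem,
      fun k => closure_mono (Set.inter_subset_inter_right _ Set.inter_subset_right) (hC'cl k)⟩
  choose stepFun hstep1 hstep2 using hstep
  set g : ℕ → {p : PeSt X // PeInv Ω x ω W p} :=
    fun n => stepFun^[n] ⟨_, h0⟩ with hg
  have hgsucc : ∀ n, g (n + 1) = stepFun (g n) := by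
    intro n; rw [hg]; exact Function.iterate_succ_apply' _ _ _
  refine ⟨fun n => (g n).1.C, fun n => (g n).1.rho, ?_, ?_, ?_, ?_, ?_, ?_, ?_, ?_, ?_, ?_⟩
  · intro n
    show IsOpen (g n).1.C
    obtain ⟨y, hy, hCeq⟩ := (g n).2.2.2.2.2.2.2.1
    rw [hCeq]
    exact (((g n).2.2.2.2.2.1).inter hΩo).connectedComponentIn
  · intro n
    show IsConnected (g n).1.C
    obtain ⟨y, hy, hCeq⟩ := (g n).2.2.2.2.2.2.2.1
    rw [hCeq]
    exact isConnected_connectedComponentIn_iff.mpr hy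
  · intro n
    show (g n).1.C ⊆ Ω
    obtain ⟨y, hy, hCeq⟩ := (g n).2.2.2.2.2.2.2.1
    rw [hCeq]
    exact (connectedComponentIn_subset _ _).trans Set.inter_subset_right
  · intro n
    show (g (n+1)).1.C ⊆ (g n).1.C
    rw [hgsucc n]
    exact hstep1 (g n)
  · intro n k
    exact (g n).2.2.2.2.2.2.2.2 k
  · intro n
    exact lt_of_lt_of_le (g n).2.1 (g n).2.2.1
  · intro n
    induction n with
    | zero => simpa using (g 0).2.2.2.1
    | succ m ih =>
      show (g (m+1)).1.rho ≤ dist x ω / 2 * (1 / 2) ^ (m+1)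
      simp only at ih
      have h1 : (g (m + 1)).1.rho = (g m).1.eps / 2 := by rw [hgsucc m]; exact hstep2 (g m)
      have h2 : (g m).1.eps ≤ (g m).1.rho := (g m).2.2.1
      rw [h1]
      calc (g m).1.eps / 2 ≤ (g m).1.rho / 2 := by linarith
      _ ≤ dist x ω / 2 * (1 / 2) ^ m / 2 := by linarith
      _ = dist x ω / 2 * (1 / 2) ^ (m + 1) := by ring
  · intro n
    show (g n).1.C ⊆ ball x (g n).1.rho
    obtain ⟨y, hy, hCeq⟩ := (g n).2.2.2.2.2.2.2.1
    rw [hCeq]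
    exact ((connectedComponentIn_subset _ _).trans Set.inter_subset_left).trans
      (g n).2.2.2.2.2.2.1
  · intro n hCeqΩ
    rw [show (fun n => (g n).1.C) n = (g n).1.C from rfl] at hCeqΩ
    have hsub : (g n).1.C ⊆ ball x (g n).1.rho := by
      obtain ⟨y, hy, hCeq⟩ := (g n).2.2.2.2.2.2.2.1
      rw [hCeq]
      exact ((connectedComponentIn_subset _ _).trans Set.inter_subset_left).trans
        (g n).2.2.2.2.2.2.1
    have hωC : ω ∈ (g n).1.C := by rw [hCeqΩ]; exact hω
    have : ω ∈ ball x (g n).1.rho := hsub hωC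
    have hle : (g n).1.rho ≤ dist x ω / 2 := (g n).2.2.2.1
    rw [mem_ball, dist_comm] at this
    linarith
  · intro n
    -- frontier points of C m inside Ω lie on "frontier G m"
    have hfr : ∀ m, ∀ z ∈ Ω ∩ frontier (g m).1.C, z ∈ closure (g m).1.G \ (g m).1.G := by
      rintro m z ⟨hzΩ, hzf⟩
      obtain ⟨y, hy, hCeq⟩ := (g m).2.2.2.2.2.2.2.1
      have hCopen : IsOpen (g m).1.C := by
        rw [hCeq]; exact (((g m).2.2.2.2.2.1).inter hΩo).connectedComponentIn
      have hzC : z ∉ (g m).1.C := fun h => hzf.2 (by rwa [hCopen.interior_eq])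
      have hzcl : z ∈ closure (g m).1.C := hzf.1
      have hCG : (g m).1.C ⊆ (g m).1.G := by
        rw [hCeq]; exact (connectedComponentIn_subset _ _).trans Set.inter_subset_left
      refine ⟨closure_mono hCG hzcl, fun hzG => hzC ?_⟩
      rw [hCeq]
      refine pe_closure_componentIn ⟨?_, ⟨hzG, hzΩ⟩⟩
      rwa [← hCeq]
    have hCopen : ∀ m, IsOpen (g m).1.C := by
      intro m
      obtain ⟨y, hy, hCeq⟩ := (g m).2.2.2.2.2.2.2.1
      rw [hCeq]; exact (((g m).2.2.2.2.2.1).inter hΩo).connectedComponentIn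
    have hCne : ∀ m, (g m).1.C.Nonempty := by
      intro m
      obtain ⟨y, hy, hCeq⟩ := (g m).2.2.2.2.2.2.2.1
      rw [hCeq]; exact ⟨y, mem_connectedComponentIn hy⟩
    have hCsub : ∀ m, (g m).1.C ⊆ Ω := by
      intro m
      obtain ⟨y, hy, hCeq⟩ := (g m).2.2.2.2.2.2.2.1
      rw [hCeq]; exact (connectedComponentIn_subset _ _).trans Set.inter_subset_right
    have hCneq : ∀ m, (g m).1.C ≠ Ω := by
      intro m hCeqΩ
      have hsub : (g m).1.C ⊆ ball x (g m).1.rho := by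
        obtain ⟨y, hy, hCeq⟩ := (g m).2.2.2.2.2.2.2.1
        rw [hCeq]
        exact ((connectedComponentIn_subset _ _).trans Set.inter_subset_left).trans
          (g m).2.2.2.2.2.2.1
      have hωC : ω ∈ (g m).1.C := by rw [hCeqΩ]; exact hω
      have : ω ∈ ball x (g m).1.rho := hsub hωC
      have hle : (g m).1.rho ≤ dist x ω / 2 := (g m).2.2.2.1
      rw [mem_ball, dist_comm] at this
      linarith
    have hS'ne := pe_frontier_nonempty hΩo hΩc (hCopen (n+1)) (hCne (n+1)) (hCsub (n+1))
      (hCneq (n+1))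
    have hSne := pe_frontier_nonempty hΩo hΩc (hCopen n) (hCne n) (hCsub n) (hCneq n)
    have hrhoeps : (g (n+1)).1.rho = (g n).1.eps / 2 := by rw [hgsucc n]; exact hstep2 (g n)
    show 0 < setDist (Ω ∩ frontier (g (n+1)).1.C) (Ω ∩ frontier (g n).1.C)
    have heps : 0 < (g n).1.eps := (g n).2.1
    refine lt_of_lt_of_le (by linarith : (0:ℝ) < (g n).1.eps / 2) ?_
    apply pe_le_setDist hS'ne hSne
    intro a ha b hb
    have ha' := hfr (n+1) a ha
    have hb' := hfr n b hb
    have hax : dist x a ≤ (g (n+1)).1.rho := by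
      have : a ∈ closure (ball x (g (n+1)).1.rho) :=
        closure_mono (g (n+1)).2.2.2.2.2.2.1 ha'.1
      have := closure_ball_subset_closedBall this
      rwa [mem_closedBall, dist_comm] at this
    have hbx : (g n).1.eps ≤ dist x b := by
      by_contra h
      push_neg at h
      exact hb'.2 ((g n).2.2.2.2.1 (by rwa [mem_ball, dist_comm]))
    calc (g n).1.eps / 2 = (g n).1.eps - (g n).1.eps / 2 := by ring
    _ ≤ dist x b - dist x a := by
        rw [hrhoeps] at hax
        exact sub_le_sub hbx hax
    _ ≤ dist a b := by
        linarith [dist_triangle x a b]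

theorem pe_small_index {R δ : ℝ} (hR : 0 < R) (hδ : 0 < δ) (ρ : ℕ → ℝ)
    (hρ : ∀ n, ρ n ≤ R * (1 / 2) ^ n) : ∃ n, 2 * ρ n < δ := by
  obtain ⟨n, hn⟩ := exists_pow_lt_of_lt_one (x := δ / (2 * R)) (y := (1:ℝ)/2)
    (by positivity) (by norm_num)
  refine ⟨n, ?_⟩
  have := hρ n
  have h2 : (1/2:ℝ)^n * (2*R) < δ / (2*R) * (2*R) := by
    apply mul_lt_mul_of_pos_right hn (by positivity)
  rw [div_mul_cancel₀] at h2
  · nlinarith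
  · positivity

theorem pe_nonempty_of_closure {s : Set X} {x : X} (h : x ∈ closure s) : s.Nonempty := by
  rcases Set.eq_empty_or_nonempty s with rfl | h'
  · rw [closure_empty] at h; simp at h
  · exact h'

theorem pe_impression_eq {C : ℕ → Set X} {ρ : ℕ → ℝ} {x : X} {R : ℝ} (hR : 0 < R)
    (hball : ∀ n, C n ⊆ ball x (ρ n)) (hρ : ∀ n, ρ n ≤ R * (1 / 2) ^ n)
    (hcl : ∀ n, x ∈ closure (C n)) : (⋂ n, closure (C n)) = {x} := by
  apply Set.Subset.antisymm
  · intro z hz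
    rw [Set.mem_singleton_iff, ← dist_eq_zero (x := z) (y := x)]
    by_contra h
    have hd : 0 < dist z x := lt_of_le_of_ne dist_nonneg (Ne.symm h)
    obtain ⟨n, hn⟩ := pe_small_index hR hd ρ hρ
    have hz' : z ∈ closure (C n) := Set.mem_iInter.mp hz n
    have : z ∈ closedBall x (ρ n) :=
      closure_ball_subset_closedBall (closure_mono (hball n) hz')
    rw [mem_closedBall] at this
    linarith
  · intro z hz
    rw [Set.mem_singleton_iff] at hz
    subst hz
    exact Set.mem_iInter.mpr hcl

theorem pe_tower_divides {Ω : Set X} {E C : ℕ → Set X} {ρ : ℕ → ℝ} {x : X} {R : ℝ}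
    (hR : 0 < R) (hch : IsChainIn Ω E)
    (hCc : ∀ n, IsConnected (C n)) (hCsub : ∀ n, C n ⊆ Ω)
    (hCcl : ∀ n k, x ∈ closure (C n ∩ E k))
    (hball : ∀ n, C n ⊆ ball x (ρ n)) (hρ : ∀ n, ρ n ≤ R * (1 / 2) ^ n) :
    Divides C E := by
  intro k
  have hδ : 0 < setDist (Ω ∩ frontier (E (k + 1))) (Ω ∩ frontier (E k)) := hch.2.2.1 k
  obtain ⟨n, hn⟩ := pe_small_index hR hδ ρ hρ
  refine ⟨n, ?_⟩
  by_contra hnot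
  have hmeet : (C n ∩ E (k + 1)).Nonempty := pe_nonempty_of_closure (hCcl n (k + 1))
  have hne1 : (C n \ E (k + 1)).Nonempty := by
    rcases Set.not_subset.mp (fun hsub => hnot (hsub.trans (hch.2.1 k))) with ⟨z, h1, h2⟩
    exact ⟨z, h1, h2⟩
  have hne2 : (C n \ E k).Nonempty := by
    rcases Set.not_subset.mp hnot with ⟨z, h1, h2⟩
    exact ⟨z, h1, h2⟩
  obtain ⟨a, haC, haf⟩ := pe_connected_frontier (hCc n).isPreconnected hmeet hne1
  obtain ⟨b, hbC, hbf⟩ := pe_connected_frontier (hCc n).isPreconnected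
    (hmeet.mono (Set.inter_subset_inter_right _ (hch.2.1 k))) hne2
  have hab : setDist (Ω ∩ frontier (E (k + 1))) (Ω ∩ frontier (E k)) ≤ dist a b :=
    pe_setDist_le ⟨hCsub n haC, haf⟩ ⟨hCsub n hbC, hbf⟩
  have h1 := mem_ball.mp (hball n haC)
  have h2 := mem_ball.mp (hball n hbC)
  have : dist a b < 2 * ρ n := by
    calc dist a b ≤ dist a x + dist x b := dist_triangle _ _ _
    _ < ρ n + ρ n := by rw [dist_comm x b]; exact add_lt_add h1 h2
    _ = 2 * ρ n := by ring
  linarith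


theorem pe_tower_isChain {Ω : Set X} {C : ℕ → Set X} {x : X}
    (hΩbd : Bornology.IsBounded Ω) (hxfr : x ∈ frontier Ω)
    (hCc : ∀ n, IsConnected (C n)) (hCsub : ∀ n, C n ⊆ Ω)
    (hCnest : ∀ n, C (n + 1) ⊆ C n) (hclx : ∀ n, x ∈ closure (C n))
    (hCneq : ∀ n, C n ≠ Ω)
    (hsd : ∀ n, 0 < setDist (Ω ∩ frontier (C (n + 1))) (Ω ∩ frontier (C n)))
    (himp : (⋂ n, closure (C n)) = {x}) : IsChainIn Ω C :=
  ⟨fun n => ⟨hΩbd.subset (hCsub n), hCc n, hCsub n, hCneq n, ⟨x, hclx n, hxfr⟩⟩,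
    hCnest, hsd, by rw [himp]; simpa using hxfr⟩

theorem pe_idx_mod {i K : ℕ} (hK : 0 < K) : (i + 1) % K = (i % K + 1) % K := by
  conv_lhs => rw [← Nat.div_add_mod i K]
  rw [show K * (i / K) + i % K + 1 = (i % K + 1) + K * (i / K) by ring]
  exact Nat.add_mul_mod_self_left _ _ _

theorem pe_idx_succ {i K : ℕ} (hK : 0 < K) (h : (i + 1) % K = 0) :
    (i + 1) / K = i / K + 1 ∧ i % K = K - 1 := by
  constructor
  · rw [Nat.succ_div, if_pos (Nat.dvd_of_mod_eq_zero h)]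
  · have h2 : (i % K + 1) % K = 0 := by rw [← pe_idx_mod hK]; exact h
    have h3 : i % K < K := Nat.mod_lt _ hK
    by_cases hlt : i % K + 1 < K
    · rw [Nat.mod_eq_of_lt hlt] at h2; omega
    · omega

theorem pe_idx_succ' {i K : ℕ} (hK : 0 < K) (h : (i + 1) % K ≠ 0) :
    (i + 1) / K = i / K ∧ (i + 1) % K = i % K + 1 := by
  have h3 : i % K < K := Nat.mod_lt _ hK
  have h2 : (i + 1) % K = (i % K + 1) % K := pe_idx_mod hK
  have hlt : i % K + 1 < K := by
    rcases Nat.lt_or_ge (i % K + 1) K with hc | hc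
    · exact hc
    · have : i % K + 1 = K := by omega
      rw [h2, this, Nat.mod_self] at h
      exact absurd rfl h
  constructor
  · rw [Nat.succ_div, if_neg (fun hd => h (Nat.mod_eq_zero_of_dvd hd))]
    simp
  · rw [h2, Nat.mod_eq_of_lt hlt]

theorem pe_idx_last {i M K : ℕ} (hK : 0 < K) (hM : 0 < M) (h : i + 1 = M * K) :
    i / K = M - 1 ∧ i % K = K - 1 := by
  have hmod : (i + 1) % K = 0 := by rw [h]; exact Nat.mul_mod_left _ _
  obtain ⟨hdiv, hmodi⟩ := pe_idx_succ hK hmod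
  have : (i + 1) / K = M := by rw [h, Nat.mul_div_cancel _ hK]
  refine ⟨by omega, hmodi⟩


/-- Chains of small connected open sets join any two points of an open preconnected set. -/
theorem pe_chain_lemma [LocallyConnectedSpace X] {V : Set X} (hVo : IsOpen V)
    (hVc : IsPreconnected V) {a b : X} (ha : a ∈ V) (hb : b ∈ V) {ε : ℝ} (hε : 0 < ε) :
    ∃ (m : ℕ) (p : ℕ → X) (D : ℕ → Set X), 0 < m ∧ p 0 = a ∧ p m = b ∧
      ∀ i < m, p i ∈ D i ∧ p (i + 1) ∈ D i ∧ IsOpen (D i) ∧ IsPreconnected (D i) ∧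
        D i ⊆ ball (p i) ε ∧ closure (D i) ⊆ V := by
  set Ch : X → Prop := fun c => ∃ (m : ℕ) (p : ℕ → X) (D : ℕ → Set X),
    0 < m ∧ p 0 = a ∧ p m = c ∧
    ∀ i < m, p i ∈ D i ∧ p (i + 1) ∈ D i ∧ IsOpen (D i) ∧ IsPreconnected (D i) ∧
      D i ⊆ ball (p i) ε ∧ closure (D i) ⊆ V with hCh
  set R : Set X := {c | Ch c} with hR
  -- the endpoint of a chain lies in V
  have hRV : R ⊆ V := by
    rintro c ⟨m, p, D, hm, hp0, hpm, hcond⟩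
    have h := hcond (m - 1) (Nat.sub_lt hm Nat.one_pos)
    have : p (m - 1 + 1) ∈ D (m - 1) := h.2.1
    rw [show m - 1 + 1 = m by omega, hpm] at this
    exact h.2.2.2.2.2 (subset_closure this)
  -- extension step
  have hext : ∀ c, c ∈ R → ∀ D' : Set X, c ∈ D' → IsOpen D' → IsPreconnected D' →
      D' ⊆ ball c ε → closure D' ⊆ V → ∀ c' ∈ D', c' ∈ R := by
    rintro c ⟨m, p, D, hm, hp0, hpm, hcond⟩ D' hcD' hD'o hD'c hD'b hD'V c' hc'
    refine ⟨m + 1, fun i => if i ≤ m then p i else c', fun i => if i < m then D i else D', 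
      Nat.succ_pos m, by simpa using hp0, by simp, ?_⟩
    intro i hi
    rcases lt_or_ge i m with him | him
    · have h := hcond i him
      simp only [if_pos him.le, if_pos (Nat.succ_le_of_lt him), if_pos him]
      exact h
    · have hieq : i = m := le_antisymm (Nat.lt_succ_iff.mp hi) him
      subst hieq
      simp only [if_pos (le_refl i), if_neg (lt_irrefl i), if_neg (by omega : ¬ i + 1 ≤ i)]
      rw [hpm]
      exact ⟨hcD', hc', hD'o, hD'c, hD'b, hD'V⟩
  -- a ∈ R
  have haR : a ∈ R := by
    obtain ⟨D0, haD0, hD0o, hD0c, hD0b, hD0V⟩ := pe_small_nbhd hVo ha hε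
    exact ⟨1, fun _ => a, fun _ => D0, Nat.one_pos, rfl, rfl, fun i hi => by
      interval_cases i
      exact ⟨haD0, haD0, hD0o, hD0c, hD0b, hD0V⟩⟩
  -- R is open
  have hRo : IsOpen R := by
    rw [isOpen_iff_forall_mem_open]
    intro c hc
    obtain ⟨D', hcD', hD'o, hD'c, hD'b, hD'V⟩ := pe_small_nbhd hVo (hRV hc) hε
    exact ⟨D', fun c' hc' => hext c hc D' hcD' hD'o hD'c hD'b hD'V c' hc', hD'o, hcD'⟩
  -- V ∩ closure R ⊆ R
  have hRcl : ∀ c ∈ V, c ∈ closure R → c ∈ R := by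
    intro c hcV hccl
    obtain ⟨D', hcD', hD'o, hD'c, hD'b, hD'V⟩ := pe_small_nbhd hVo hcV (half_pos hε)
    obtain ⟨c'', hc''D', hc''R⟩ :=
      _root_.mem_closure_iff.mp hccl D' hD'o hcD'
    have hD'b2 : D' ⊆ ball c'' ε := by
      intro z hz
      have h1 : dist z c < ε / 2 := mem_ball.mp (hD'b hz)
      have h2 : dist c'' c < ε / 2 := mem_ball.mp (hD'b hc''D')
      rw [mem_ball]
      calc dist z c'' ≤ dist z c + dist c c'' := dist_triangle _ _ _
      _ < ε / 2 + ε / 2 := by rw [dist_comm c c'']; exact add_lt_add h1 h2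
      _ = ε := by ring
    exact hext c'' hc''R D' hc''D' hD'o hD'c hD'b2 hD'V c hcD'
  -- conclude b ∈ R by preconnectedness
  have hbR : b ∈ R := by
    by_contra hbR
    have hcover : V ⊆ R ∪ (closure R)ᶜ := by
      intro v hv
      by_cases hvc : v ∈ closure R
      · exact Or.inl (hRcl v hv hvc)
      · exact Or.inr hvc
    obtain ⟨v, _, hv1, hv2⟩ := hVc R (closure R)ᶜ hRo isClosed_closure.isOpen_compl hcover
      ⟨a, ha, haR⟩ ⟨b, hb, fun hbc => hbR (hRcl b hb hbc)⟩
    exact hv2 (subset_closure hv1)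
  exact hbR

structure PeStage (X : Type*) [MetricSpace X] where
  M : ℕ
  q : ℕ → X
  D : ℕ → Set X

def PeStInv (U : Set X) (z w : X) (e : ℝ) (s : PeStage X) : Prop :=
  0 < s.M ∧ s.q 0 = z ∧ s.q s.M = w ∧
  ∀ j < s.M, s.q j ∈ s.D j ∧ s.q (j + 1) ∈ s.D j ∧ IsOpen (s.D j) ∧ IsPreconnected (s.D j) ∧
    s.D j ⊆ ball (s.q j) e ∧ closure (s.D j) ⊆ U

def PeStRel (s s' : PeStage X) : Prop :=
  ∃ K, 0 < K ∧ s'.M = s.M * K ∧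
    ∀ i < s'.M, closure (s'.D i) ⊆ s.D (i / K) ∧ s'.q i ∈ s.D (i / K)

theorem pe_stage_step [LocallyConnectedSpace X] {U : Set X} {z w : X} {e e' : ℝ}
    (he' : 0 < e') (s : PeStage X) (hs : PeStInv U z w e s) :
    ∃ s', PeStInv U z w e' s' ∧ PeStRel s s' := by
  obtain ⟨hM, hq0, hqM, hcond⟩ := hs
  have hch' : ∀ j : ℕ, ∃ (m : ℕ) (p : ℕ → X) (D' : ℕ → Set X) (Db : Set X),
      j < s.M → (0 < m ∧ p 0 = s.q j ∧ p m = s.q (j + 1) ∧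
      (∀ i < m, p i ∈ D' i ∧ p (i + 1) ∈ D' i ∧ IsOpen (D' i) ∧ IsPreconnected (D' i) ∧
        D' i ⊆ ball (p i) e' ∧ closure (D' i) ⊆ s.D j) ∧
      (s.q (j + 1) ∈ Db ∧ IsOpen Db ∧ IsPreconnected Db ∧
        Db ⊆ ball (s.q (j + 1)) e' ∧ closure Db ⊆ s.D j)) := by
    intro j
    by_cases hj : j < s.M
    · obtain ⟨h1, h2, h3, h4, h5, h6⟩ := hcond j hj
      obtain ⟨m, p, D', hm, hp0, hpm, hcc⟩ := pe_chain_lemma h3 h4 h1 h2 he'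
      obtain ⟨Db, hb1, hb2, hb3, hb4, hb5⟩ := pe_small_nbhd h3 h2 he'
      exact ⟨m, p, D', Db, fun _ => ⟨hm, hp0, hpm, hcc, hb1, hb2, hb3, hb4, hb5⟩⟩
    · exact ⟨1, fun _ => z, fun _ => ∅, ∅, fun h => absurd h hj⟩
  choose m p D' Db hspec using hch'
  set K : ℕ := max 1 ((Finset.range s.M).sup m) with hK
  have hK0 : 0 < K := lt_of_lt_of_le Nat.one_pos (le_max_left _ _)
  have hKm : ∀ j, j < s.M → m j ≤ K :=
    fun j hj => le_trans (Finset.le_sup (Finset.mem_range.mpr hj)) (le_max_right _ _)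
  set M' : ℕ := s.M * K with hM'
  have hM'0 : 0 < M' := Nat.mul_pos hM hK0
  set pbar : ℕ → ℕ → X := fun j i => p j (min i (m j)) with hpbar
  set Dbar : ℕ → ℕ → Set X := fun j i => if i < m j then D' j i else Db j with hDbar
  set q' : ℕ → X := fun i => if i < M' then pbar (i / K) (i % K) else w with hq'
  set Dn : ℕ → Set X := fun i => Dbar (i / K) (i % K) with hDn
  have hidx : ∀ i, i < M' → i / K < s.M ∧ i % K < K := by
    intro i hi
    exact ⟨(Nat.div_lt_iff_lt_mul hK0).mpr (by rwa [← hM']), Nat.mod_lt _ hK0⟩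
  -- endpoint of padded chain
  have hpend : ∀ j, j < s.M → pbar j K = s.q (j + 1) := by
    intro j hj
    obtain ⟨_, _, hpm, _, _⟩ := hspec j hj
    simp only [hpbar, min_eq_right (hKm _ hj)]
    exact hpm
  have hpzero : ∀ j, j < s.M → pbar j 0 = s.q j := by
    intro j hj
    obtain ⟨_, hp0, _, _, _⟩ := hspec j hj
    simp only [hpbar, Nat.zero_min]
    exact hp0
  have hpadA : ∀ j, j < s.M → ∀ l, l < K → pbar j l ∈ Dbar j l := by
    intro j hj l _
    obtain ⟨_, _, hpm, hcc, hDb⟩ := hspec j hj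
    by_cases hl : l < m j
    · simp only [hpbar, hDbar, if_pos hl, min_eq_left hl.le]
      exact (hcc l hl).1
    · push_neg at hl
      simp only [hpbar, hDbar, if_neg (not_lt.mpr hl), min_eq_right hl]
      rw [hpm]
      exact hDb.1
  have hpadB : ∀ j, j < s.M → ∀ l, l < K → pbar j (l + 1) ∈ Dbar j l := by
    intro j hj l _
    obtain ⟨hm0, _, hpm, hcc, hDb⟩ := hspec j hj
    by_cases hl : l < m j
    · simp only [hpbar, hDbar, if_pos hl, min_eq_left (Nat.succ_le_of_lt hl)]
      exact (hcc l hl).2.1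
    · push_neg at hl
      simp only [hpbar, hDbar, if_neg (not_lt.mpr hl), min_eq_right (le_trans hl (Nat.le_succ l))]
      rw [hpm]
      exact hDb.1
  have hpadO : ∀ j, j < s.M → ∀ l, IsOpen (Dbar j l) ∧ IsPreconnected (Dbar j l) := by
    intro j hj l
    obtain ⟨_, _, _, hcc, hDb⟩ := hspec j hj
    by_cases hl : l < m j
    · simp only [hDbar, if_pos hl]
      exact ⟨(hcc l hl).2.2.1, (hcc l hl).2.2.2.1⟩
    · simp only [hDbar, if_neg hl]
      exact ⟨hDb.2.1, hDb.2.2.1⟩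
  have hpadBall : ∀ j, j < s.M → ∀ l, l < K → Dbar j l ⊆ ball (pbar j l) e' := by
    intro j hj l _
    obtain ⟨_, _, hpm, hcc, hDb⟩ := hspec j hj
    by_cases hl : l < m j
    · simp only [hpbar, hDbar, if_pos hl, min_eq_left hl.le]
      exact (hcc l hl).2.2.2.2.1
    · push_neg at hl
      simp only [hpbar, hDbar, if_neg (not_lt.mpr hl), min_eq_right hl]
      rw [hpm]
      exact hDb.2.2.2.1
  have hpadCl : ∀ j, j < s.M → ∀ l, closure (Dbar j l) ⊆ s.D j := by
    intro j hj l
    obtain ⟨_, _, _, hcc, hDb⟩ := hspec j hj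
    by_cases hl : l < m j
    · simp only [hDbar, if_pos hl]
      exact (hcc l hl).2.2.2.2.2
    · simp only [hDbar, if_neg hl]
      exact hDb.2.2.2.2
  have hvq : ∀ i, i < M' → q' i = pbar (i / K) (i % K) := by
    intro i hi
    simp only [hq', if_pos hi]
  have hq'succ : ∀ i, i < M' → q' (i + 1) ∈ Dn i := by
    intro i hi
    obtain ⟨hjM, hlK⟩ := hidx i hi
    show q' (i + 1) ∈ Dbar (i / K) (i % K)
    by_cases hiend : i + 1 < M'
    · by_cases hcross : (i + 1) % K = 0
      · obtain ⟨hdiv, hmod⟩ := pe_idx_succ hK0 hcross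
        have hj1M : i / K + 1 < s.M := by
          have := (hidx (i + 1) hiend).1
          rwa [hdiv] at this
        have hval : q' (i + 1) = s.q (i / K + 1) := by
          rw [hvq _ hiend, hdiv, hcross, hpzero _ hj1M]
        rw [hval, ← hpend _ hjM, hmod]
        have := hpadB (i / K) hjM (K - 1) (by omega)
        rwa [show K - 1 + 1 = K by omega] at this
      · obtain ⟨hdiv, hmod⟩ := pe_idx_succ' hK0 hcross
        rw [hvq _ hiend, hdiv, hmod]
        exact hpadB (i / K) hjM (i % K) hlK
    · have hieq : i + 1 = M' := by omega
      obtain ⟨hjlast, hmod⟩ := pe_idx_last hK0 hM (by rwa [hM'] at hieq)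
      have hval : q' (i + 1) = w := by simp only [hq', if_neg (by omega : ¬ i + 1 < M')]
      rw [hval, ← hqM, show s.M = s.M - 1 + 1 by omega, ← hpend _ (by omega : s.M - 1 < s.M),
        hjlast, hmod]
      have := hpadB (s.M - 1) (by omega) (K - 1) (by omega)
      rwa [show K - 1 + 1 = K by omega] at this
  refine ⟨⟨M', q', Dn⟩, ⟨hM'0, ?_, ?_, ?_⟩, K, hK0, rfl, ?_⟩
  · show q' 0 = z
    rw [hvq 0 hM'0, Nat.zero_div, Nat.zero_mod, hpzero _ hM, hq0]
  · show q' M' = w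
    simp only [hq', if_neg (lt_irrefl M')]
  · intro j hj
    replace hj : j < M' := hj
    obtain ⟨hjM, hlK⟩ := hidx j hj
    refine ⟨?_, hq'succ j hj, (hpadO _ hjM _).1, (hpadO _ hjM _).2, ?_, ?_⟩
    · show q' j ∈ Dbar (j / K) (j % K)
      rw [hvq _ hj]
      exact hpadA _ hjM _ hlK
    · show Dbar (j / K) (j % K) ⊆ ball (q' j) e'
      rw [hvq _ hj]
      exact hpadBall _ hjM _ hlK
    · show closure (Dbar (j / K) (j % K)) ⊆ U
      refine (hpadCl _ hjM _).trans ?_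
      obtain ⟨_, _, _, _, _, h6⟩ := hcond (j / K) hjM
      exact fun y hy => h6 (subset_closure hy)
  · intro i hi
    replace hi : i < M' := hi
    obtain ⟨hjM, hlK⟩ := hidx i hi
    refine ⟨hpadCl _ hjM _, ?_⟩
    show q' i ∈ s.D (i / K)
    rw [hvq _ hi]
    exact (hpadCl _ hjM _) (subset_closure (hpadA _ hjM _ hlK))

theorem pe_half_pow (n : ℕ) : ((1:ℝ)/2)^n = 1/2^n := by
  rw [div_pow, one_pow]

theorem pe_path [ProperSpace X] [LocallyConnectedSpace X] {U : Set X} (hUo : IsOpen U)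
    (hUc : IsPreconnected U) {z w : X} (hz : z ∈ U) (hw : w ∈ U) :
    ∃ γ : ℝ → X, Continuous γ ∧ γ 0 = z ∧ γ 1 = w ∧ ∀ t, γ t ∈ U := by
  classical
  -- base stage
  obtain ⟨m0, p0, D0, hm0, hp00, hp0m, hcc0⟩ :=
    pe_chain_lemma hUo hUc hz hw (ε := ((1:ℝ)/2)^(0+1)) (by norm_num)
  have h0 : PeStInv U z w (((1:ℝ)/2)^(0+1)) ⟨m0, p0, D0⟩ := ⟨hm0, hp00, hp0m, hcc0⟩
  have hstep : ∀ (n : ℕ) (s : PeStage X), PeStInv U z w (((1:ℝ)/2)^(n+1)) s →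
      ∃ s', PeStInv U z w (((1:ℝ)/2)^(n+2)) s' ∧ PeStRel s s' :=
    fun n s hs => pe_stage_step (by positivity) s hs
  choose F hF1 hF2 using hstep
  let seq : ∀ n : ℕ, {s : PeStage X // PeStInv U z w (((1:ℝ)/2)^(n+1)) s} :=
    fun n => Nat.rec ⟨⟨m0, p0, D0⟩, h0⟩ (fun k ih => ⟨F k ih.1 ih.2, hF1 k ih.1 ih.2⟩) n
  have hrel : ∀ n, PeStRel (seq n).1 (seq (n+1)).1 := fun n => hF2 n (seq n).1 (seq n).2
  set M : ℕ → ℕ := fun n => (seq n).1.M with hMdef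
  set q : ℕ → ℕ → X := fun n => (seq n).1.q with hqdef
  set D : ℕ → ℕ → Set X := fun n => (seq n).1.D with hDdef
  have hInv : ∀ n, 0 < M n ∧ q n 0 = z ∧ q n (M n) = w ∧
      ∀ j < M n, q n j ∈ D n j ∧ q n (j + 1) ∈ D n j ∧ IsOpen (D n j) ∧
        IsPreconnected (D n j) ∧ D n j ⊆ ball (q n j) (((1:ℝ)/2)^(n+1)) ∧
        closure (D n j) ⊆ U := fun n => (seq n).2
  choose K hK0 hKM0 hKrel0 using hrel
  have hKM : ∀ n, M (n+1) = M n * K n := hKM0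
  have hKrel : ∀ n i, i < M (n+1) →
      closure (D (n+1) i) ⊆ D n (i / K n) ∧ q (n+1) i ∈ D n (i / K n) := hKrel0
  -- index functions
  set jdx : ℝ → ℕ → ℕ := fun t n => min (⌊(max t 0) * (M n)⌋₊) (M n - 1) with hjdxdef
  set u : ℝ → ℕ → X := fun t n => q n (jdx t n) with hudef
  have hjdx_lt : ∀ t n, jdx t n < M n := by
    intro t n
    exact lt_of_le_of_lt (min_le_right _ _) (Nat.sub_lt (hInv n).1 Nat.one_pos)
  have hMK : ∀ n, (M (n+1) : ℝ) = (M n : ℝ) * (K n : ℝ) := by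
    intro n; exact_mod_cast hKM n
  have hjdx_div : ∀ t n, jdx t (n+1) / K n = jdx t n := by
    intro t n
    simp only [hjdxdef]
    set a := max t 0 with hadef
    have ha : 0 ≤ a := le_max_right _ _
    rcases lt_or_ge a 1 with h1 | h1
    · have hflt : ∀ nn, ⌊a * (M nn)⌋₊ < M nn := by
        intro nn
        rw [Nat.floor_lt (by positivity)]
        exact mul_lt_of_lt_one_left (by exact_mod_cast (hInv nn).1) h1
      rw [min_eq_left (Nat.le_sub_one_of_lt (hflt (n+1))),
        min_eq_left (Nat.le_sub_one_of_lt (hflt n))]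
      have hKne : (K n : ℝ) ≠ 0 := by exact_mod_cast (hK0 n).ne'
      have : a * (M (n+1)) = (a * M n) * K n := by rw [hMK n]; ring
      rw [this, ← Nat.floor_div_natCast ((a * M n) * K n) (K n)]
      congr 1
      field_simp
    · have hfge : ∀ nn, M nn ≤ ⌊a * (M nn)⌋₊ := by
        intro nn
        apply Nat.le_floor
        calc ((M nn : ℝ)) = 1 * M nn := (one_mul _).symm
        _ ≤ a * M nn := by
            apply mul_le_mul_of_nonneg_right h1 (by positivity)
      rw [min_eq_right (by have := hfge (n+1); omega : M (n+1) - 1 ≤ ⌊a * (M (n+1))⌋₊),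
        min_eq_right (by have := hfge n; omega : M n - 1 ≤ ⌊a * (M n)⌋₊)]
      have hone : M (n+1) - 1 + 1 = M n * K n := by
        have h := hKM n
        have := Nat.mul_pos (hInv n).1 (hK0 n)
        omega
      exact (pe_idx_last (hK0 n) (hInv n).1 hone).1
  have humem : ∀ t n, u t n ∈ D n (jdx t n) := by
    intro t n
    exact ((hInv n).2.2.2 (jdx t n) (hjdx_lt t n)).1
  have husucc : ∀ t n, u t (n+1) ∈ D n (jdx t n) := by
    intro t n
    have := (hKrel n (jdx t (n+1)) (hjdx_lt t (n+1))).2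
    rwa [hjdx_div t n] at this
  have hustep : ∀ t n, dist (u t n) (u t (n+1)) ≤ 1 / 2 / 2^n := by
    intro t n
    have hball := ((hInv n).2.2.2 (jdx t n) (hjdx_lt t n)).2.2.2.2.1
    have := mem_ball.mp (hball (husucc t n))
    rw [dist_comm]
    calc dist (u t (n+1)) (u t n) ≤ ((1:ℝ)/2)^(n+1) := this.le
    _ = 1 / 2 / 2^n := by rw [pe_half_pow]; ring
  have hcauchy : ∀ t, CauchySeq (u t) := fun t => cauchySeq_of_le_geometric_two (hustep t)
  have hconv : ∀ t, ∃ L, Tendsto (u t) atTop (𝓝 L) :=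
    fun t => cauchySeq_tendsto_of_complete (hcauchy t)
  choose γ hγ using hconv
  have hdist : ∀ t n, dist (u t n) (γ t) ≤ 1 / 2^n := by
    intro t n
    have := dist_le_of_le_geometric_two_of_tendsto (hustep t) (hγ t) n
    simpa using this
  -- image
  have hDanti : ∀ t n mm, n ≤ mm → D mm (jdx t mm) ⊆ D n (jdx t n) := by
    intro t n mm h
    induction mm, h using Nat.le_induction with
    | base => exact Set.Subset.rfl
    | succ mm hmm ih =>
      refine Set.Subset.trans ?_ ih
      have := (hKrel mm (jdx t (mm+1)) (hjdx_lt t (mm+1))).1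
      rw [hjdx_div t mm] at this
      exact subset_closure.trans this
  have hγmem : ∀ t n, γ t ∈ closure (D n (jdx t n)) := by
    intro t n
    apply mem_closure_of_tendsto (hγ t)
    filter_upwards [eventually_ge_atTop n] with mm hmm
    exact hDanti t n mm hmm (humem t mm)
  have hγU : ∀ t, γ t ∈ U := by
    intro t
    exact ((hInv 0).2.2.2 (jdx t 0) (hjdx_lt t 0)).2.2.2.2.2 (hγmem t 0)
  -- endpoints
  have hγ0 : γ 0 = z := by
    have hu0 : u 0 = fun _ => z := by
      funext n
      have : jdx 0 n = 0 := by
        simp [hjdxdef]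
      rw [hudef]
      simp only [this]
      exact (hInv n).2.1
    exact tendsto_nhds_unique (hu0 ▸ hγ 0) tendsto_const_nhds
  have hγ1 : γ 1 = w := by
    have hu1 : ∀ n, u 1 n = q n (M n - 1) := by
      intro n
      have : jdx 1 n = M n - 1 := by
        have : ⌊(max (1:ℝ) 0) * (M n)⌋₊ = M n := by
          rw [max_eq_left zero_le_one, one_mul, Nat.floor_natCast]
        simp [hjdxdef, this]
      rw [hudef]; simp only [this]
    have hdw : ∀ n, dist (u 1 n) w ≤ ((1:ℝ)/2)^(n+1) := by
      intro n
      have hMn := (hInv n).1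
      have hcond := (hInv n).2.2.2 (M n - 1) (Nat.sub_lt hMn Nat.one_pos)
      have hin : q n (M n) ∈ D n (M n - 1) := by
        have := hcond.2.1
        rwa [show M n - 1 + 1 = M n by omega] at this
      have := mem_ball.mp (hcond.2.2.2.2.1 hin)
      rw [hu1 n, ← (hInv n).2.2.1, dist_comm]
      exact this.le
    have htend : Tendsto (u 1) atTop (𝓝 w) := by
      rw [tendsto_iff_dist_tendsto_zero]
      apply squeeze_zero (fun n => dist_nonneg) hdw
      have := tendsto_pow_atTop_nhds_zero_of_lt_one (by norm_num : (0:ℝ) ≤ 1/2)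
        (by norm_num : (1:ℝ)/2 < 1)
      exact this.comp (tendsto_add_atTop_nat 1)
    exact tendsto_nhds_unique (hγ 1) htend
  -- modulus of continuity
  have hqadj : ∀ n j, j + 1 < M n → dist (q n j) (q n (j+1)) ≤ ((1:ℝ)/2)^(n+1) := by
    intro n j hj
    have hcond := (hInv n).2.2.2 j (by omega)
    have h := (mem_ball.mp (hcond.2.2.2.2.1 hcond.2.1)).le
    rw [dist_comm]
    exact h
  have haux : ∀ (n : ℕ) (s t : ℝ), s ≤ t → t - s ≤ 1 / M n → dist (γ s) (γ t) ≤ 5 * ((1:ℝ)/2)^n := by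
    intro n s t hst hd
    have hMn : (0:ℝ) < M n := by exact_mod_cast (hInv n).1
    set a := max s 0
    set b := max t 0
    have hab : a ≤ b := max_le_max hst (le_refl 0)
    have hba : b ≤ a + (t - s) := by
      have h1 : t ≤ s + (t - s) := by linarith
      have h2 : (0:ℝ) ≤ 0 + (t - s) := by linarith
      calc b ≤ max (s + (t-s)) (0 + (t-s)) := max_le_max h1 h2
      _ = a + (t - s) := by rw [max_add_add_right]
    have hfloor : ⌊b * M n⌋₊ ≤ ⌊a * M n⌋₊ + 1 := by
      have h1 : b * M n ≤ a * M n + 1 := by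
        have : b * M n ≤ (a + 1 / M n) * M n := by
          apply mul_le_mul_of_nonneg_right _ hMn.le
          linarith
        calc b * M n ≤ (a + 1 / M n) * M n := this
        _ = a * M n + 1 := by field_simp
      calc ⌊b * M n⌋₊ ≤ ⌊a * M n + 1⌋₊ := Nat.floor_mono h1
      _ = ⌊a * M n⌋₊ + 1 := Nat.floor_add_one (by positivity)
    have hfmono : ⌊a * M n⌋₊ ≤ ⌊b * M n⌋₊ :=
      Nat.floor_mono (mul_le_mul_of_nonneg_right hab hMn.le)
    have hjs : jdx s n = min ⌊a * (M n : ℝ)⌋₊ (M n - 1) := rfl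
    have hjt : jdx t n = min ⌊b * (M n : ℝ)⌋₊ (M n - 1) := rfl
    have hj1 : jdx s n ≤ jdx t n := by
      rw [hjs, hjt]; omega
    have hj2 : jdx t n ≤ jdx s n + 1 := by
      rw [hjs, hjt]; omega
    have hmid : dist (q n (jdx s n)) (q n (jdx t n)) ≤ ((1:ℝ)/2)^(n+1) := by
      rcases Nat.eq_or_lt_of_le hj1 with he | hlt
      · rw [he, dist_self]; positivity
      · have : jdx t n = jdx s n + 1 := by omega
        rw [this]
        exact hqadj n (jdx s n) (by rw [← this]; exact hjdx_lt t n)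
    have h1 := hdist s n
    have h2 := hdist t n
    have hhp := pe_half_pow n
    calc dist (γ s) (γ t) ≤ dist (γ s) (u s n) + dist (u s n) (u t n) + dist (u t n) (γ t) :=
      dist_triangle4 _ _ _ _
    _ ≤ 1/2^n + ((1:ℝ)/2)^(n+1) + 1/2^n := by
        rw [dist_comm (γ s)]
        gcongr
    _ ≤ 5 * ((1:ℝ)/2)^n := by
        rw [pow_succ, hhp]
        nlinarith [pow_pos (by norm_num : (0:ℝ) < 1/2) n, hhp]
  have hmod : ∀ (n : ℕ) (s t : ℝ), |s - t| ≤ 1 / M n → dist (γ s) (γ t) ≤ 5 * ((1:ℝ)/2)^n := by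
    intro n s t h
    rcases le_total s t with hst | hst
    · exact haux n s t hst (by rw [abs_sub_comm, abs_of_nonneg (by linarith)] at h; linarith)
    · rw [dist_comm]
      exact haux n t s hst (by rw [abs_of_nonneg (by linarith)] at h; linarith)
  have hcont : Continuous γ := by
    rw [Metric.continuous_iff]
    intro b ε hε
    obtain ⟨n, hn⟩ := exists_pow_lt_of_lt_one (x := ε / 5) (y := (1:ℝ)/2) (by positivity)
      (by norm_num)
    have hMn : (0:ℝ) < M n := by exact_mod_cast (hInv n).1
    refine ⟨1 / M n, by positivity, fun a ha => ?_⟩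
    have := hmod n a b (by rw [Real.dist_eq] at ha; exact ha.le)
    calc dist (γ a) (γ b) ≤ 5 * ((1:ℝ)/2)^n := this
    _ < 5 * (ε / 5) := by nlinarith
    _ = ε := by ring
  exact ⟨γ, hcont, hγ0, hγ1, hγU⟩

theorem pe_accessible [ProperSpace X] [LocallyConnectedSpace X] {Ω : Set X}
    {C : ℕ → Set X} {ρ : ℕ → ℝ} {x : X} {R : ℝ} (hR : 0 < R)
    (hCo : ∀ n, IsOpen (C n)) (hCc : ∀ n, IsConnected (C n)) (hCsub : ∀ n, C n ⊆ Ω)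
    (hCnest : ∀ n, C (n + 1) ⊆ C n) (hball : ∀ n, C n ⊆ ball x (ρ n))
    (hρ : ∀ n, ρ n ≤ R * (1 / 2) ^ n) : Accessible Ω x := by
  have hzex : ∀ n, ∃ p, p ∈ C n := fun n => (hCc n).nonempty
  choose z hzC using hzex
  have hpath : ∀ n, ∃ γ : ℝ → X, Continuous γ ∧ γ 0 = z n ∧ γ 1 = z (n + 1) ∧ ∀ t, γ t ∈ C n :=
    fun n => pe_path (hCo n) (hCc n).isPreconnected (hzC n) (hCnest n (hzC (n + 1)))
  choose Γ hΓc hΓ0 hΓ1 hΓmem using hpath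
  set A : ℝ → X := fun s => Γ ⌊s⌋₊ (s - ⌊s⌋₊) with hA
  have hAeq : ∀ n : ℕ, ∀ s ∈ Set.Icc (n : ℝ) (n + 1), A s = Γ n (s - n) := by
    intro n s ⟨h1, h2⟩
    rcases eq_or_lt_of_le h2 with he | hlt
    · have hfl : ⌊s⌋₊ = n + 1 := by
        rw [he]
        exact_mod_cast Nat.floor_natCast (n + 1)
      have e1 : A s = Γ (n + 1) 0 := by
        rw [hA]
        simp only [hfl]
        congr 1
        rw [he]
        push_cast
        ring
      have e2 : Γ n (s - n) = Γ n 1 := by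
        congr 1
        rw [he]; ring
      rw [e1, e2, hΓ1 n, hΓ0 (n + 1)]
    · have hfl : ⌊s⌋₊ = n := by
        rw [Nat.floor_eq_iff (le_trans (Nat.cast_nonneg n) h1)]
        exact ⟨h1, hlt⟩
      rw [hA]
      simp only [hfl]
  have himg : ∀ s, A s ∈ C ⌊s⌋₊ := fun s => hΓmem _ _
  have hAcont : Continuous A := by
    rw [continuous_iff_continuousAt]
    intro t
    by_cases h1 : t < 1
    · have hev : (fun s => Γ 0 s) =ᶠ[𝓝 t] A := by
        filter_upwards [Iio_mem_nhds h1] with s hs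
        have hfl : ⌊s⌋₊ = 0 := Nat.floor_eq_zero.mpr hs
        rw [hA]
        simp [hfl]
      exact ((hΓc 0).continuousAt).congr hev
    · push_neg at h1
      by_cases h2 : (⌊t⌋₊ : ℝ) = t
      · -- integer point, t = n ≥ 1
        set n := ⌊t⌋₊ with hn
        have hn1 : 1 ≤ n := by
          rw [hn]
          exact_mod_cast Nat.le_floor (by exact_mod_cast h1)
        have hcast : ((n - 1 : ℕ) : ℝ) = (n : ℝ) - 1 := by
          push_cast [Nat.cast_sub hn1]; ring
        have hn1R : (1 : ℝ) ≤ (n : ℝ) := by exact_mod_cast hn1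
        rw [continuousAt_iff_continuous_left_right]
        constructor
        · have hbase : ContinuousWithinAt (fun s => Γ (n - 1) (s - (n - 1 : ℕ))) (Iic t) t :=
            ((hΓc (n - 1)).comp (continuous_id.sub continuous_const)).continuousWithinAt
          refine hbase.congr_of_eventuallyEq ?_ ?_
          · filter_upwards [Ioc_mem_nhdsLE_of_mem
              (⟨by rw [← h2, hcast]; linarith, le_refl t⟩ : t ∈ Ioc ((n - 1 : ℕ) : ℝ) t)]
              with s hs
            refine hAeq (n - 1) s ⟨hs.1.le, ?_⟩
            rw [hcast]
            have hs2 : s ≤ t := hs.2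
            rw [← h2] at hs2
            linarith
          · refine hAeq (n - 1) t ⟨by rw [← h2, hcast]; linarith, ?_⟩
            rw [hcast, ← h2]
            linarith
        · have hbase : ContinuousWithinAt (fun s => Γ n (s - n)) (Ici t) t :=
            ((hΓc n).comp (continuous_id.sub continuous_const)).continuousWithinAt
          refine hbase.congr_of_eventuallyEq ?_ ?_
          · filter_upwards [Ico_mem_nhdsGE_of_mem
              (⟨le_refl t, by rw [← h2]; linarith⟩ : t ∈ Ico t ((n : ℝ) + 1))] with s hs
            exact hAeq n s ⟨by rw [h2]; exact hs.1, hs.2.le⟩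
          · exact hAeq n t ⟨h2.le, by rw [← h2]; linarith⟩
      · -- non-integer point > 1
        set n := ⌊t⌋₊ with hn
        have hlb : (n : ℝ) < t := lt_of_le_of_ne (Nat.floor_le (by linarith)) h2
        have hub : t < (n : ℝ) + 1 := Nat.lt_floor_add_one t
        have hev : (fun s => Γ n (s - n)) =ᶠ[𝓝 t] A := by
          filter_upwards [Ioo_mem_nhds hlb hub] with s hs
          exact (hAeq n s ⟨hs.1.le, hs.2.le⟩).symm
        exact (((hΓc n).comp (continuous_id.sub continuous_const)).continuousAt).congr hev
  -- final curve
  have hCanti : ∀ {n m : ℕ}, n ≤ m → C m ⊆ C n := by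
    intro n m h
    exact antitone_nat_of_succ_le (f := C) hCnest h
  set γf : ℝ → X := fun t => if t < 1 then A (t / (1 - t)) else x with hγf
  refine ⟨γf, ?_, ?_, ?_⟩
  · intro t ht
    rcases lt_or_ge t 1 with hlt | hge
    · apply ContinuousAt.continuousWithinAt
      have hev : (fun s => A (s / (1 - s))) =ᶠ[𝓝 t] γf := by
        filter_upwards [Iio_mem_nhds hlt] with s hs
        exact (if_pos (mem_Iio.mp hs)).symm
      refine ContinuousAt.congr ?_ hev
      apply (hAcont.continuousAt).comp
      exact (continuousAt_id.div (continuousAt_const.sub continuousAt_id) (by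
        intro h
        rw [sub_eq_zero] at h
        exact absurd h.symm (ne_of_lt hlt)))
    · have hteq : t = 1 := le_antisymm ht.2 hge
      subst hteq
      rw [Metric.continuousWithinAt_iff]
      intro ε hε
      obtain ⟨n, hn⟩ := exists_pow_lt_of_lt_one (x := ε / R) (y := (1:ℝ)/2)
        (by positivity) (by norm_num)
      have hρε : ρ n < ε := by
        have h1 := hρ n
        have h2 : R * ((1:ℝ)/2)^n < R * (ε / R) := by
          apply mul_lt_mul_of_pos_left hn hR
        rw [mul_div_cancel₀ _ hR.ne'] at h2
        linarith
      refine ⟨1 / (n + 1), by positivity, fun {s} hs hdist => ?_⟩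
      have hγf1 : γf 1 = x := by rw [hγf]; simp
      rcases lt_or_ge s 1 with hslt | hsge
      · have hs0 : 0 ≤ s := hs.1
        have h1s : 0 < 1 - s := by linarith
        have hd : 1 - s < 1 / (n + 1) := by
          rw [Real.dist_eq, abs_of_nonpos (by linarith)] at hdist
          linarith
        set r := s / (1 - s) with hr
        have hrn : (n : ℝ) ≤ r := by
          rw [hr, le_div_iff₀ h1s]
          have hn1pos : (0:ℝ) < (n : ℝ) + 1 := by positivity
          have h3 : ((n:ℝ) + 1) * (1 - s) < ((n:ℝ) + 1) * (1 / ((n:ℝ) + 1)) := by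
            apply mul_lt_mul_of_pos_left _ hn1pos
            exact_mod_cast hd
          have h4 : ((n:ℝ) + 1) * (1 / ((n:ℝ) + 1)) = 1 := by field_simp
          nlinarith [h3, h4]
        have hfl : n ≤ ⌊r⌋₊ := Nat.le_floor hrn
        have hmem : A r ∈ C n := hCanti hfl (himg r)
        have : dist (A r) x < ρ n := mem_ball.mp (hball n hmem)
        have hγfs : γf s = A r := by rw [hγf]; simp [if_pos hslt, hr]
        rw [hγfs, hγf1]
        linarith
      · have hseq : s = 1 := le_antisymm hs.2 hsge
        rw [hseq, hγf1, dist_self]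
        exact hε
  · rw [hγf]; simp
  · rintro y ⟨s, hs, rfl⟩
    have hslt : s < 1 := hs.2
    have : γf s = A (s / (1 - s)) := by rw [hγf]; simp [if_pos hslt]
    rw [this]
    exact hCsub _ (himg _)


end PE

/-- If `Ω` is finitely connected at the boundary, then every prime chain has a
singleton impression, and every boundary point is accessible and is the
impression of some prime chain. -/
theorem statement13 {X : Type*} [MetricSpace X] [ProperSpace X] [LocallyConnectedSpace X]
    (Ω : Set X) (hΩ : BoundedDomain Ω)
    (hfc : ∀ x ∈ frontier Ω, FinitelyConnectedAt Ω x) :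
    (∀ E : ℕ → Set X, IsPrimeChain Ω E → ∃ x : X, (⋂ k, closure (E k)) = {x}) ∧
    ∀ x ∈ frontier Ω, Accessible Ω x ∧
      ∃ E : ℕ → Set X, IsPrimeChain Ω E ∧ (⋂ k, closure (E k)) = {x} := by
  obtain ⟨hΩo, hΩc, hΩbd, hΩne⟩ := hΩ
  obtain ⟨ω, hω⟩ := hΩc.nonempty
  have hfrd : ∀ x ∈ frontier Ω, 0 < dist x ω / 2 := by
    intro x hx
    have hxΩ : x ∉ Ω := fun h => hx.2 (by rwa [hΩo.interior_eq])
    have : x ≠ ω := fun h => hxΩ (h ▸ hω)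
    have := dist_pos.mpr this
    linarith
  constructor
  · -- every prime chain has singleton impression
    intro E hE
    have hch := hE.1
    have himp : (⋂ n, closure (E n)).Nonempty := by
      apply IsCompact.nonempty_iInter_of_sequence_nonempty_isCompact_isClosed
        (fun n => closure (E n)) (fun n => closure_mono (hch.2.1 n))
        (fun n => ((hch.1 n).2.1.nonempty).closure)
        ((hch.1 0).1.isCompact_closure) (fun n => isClosed_closure)
    obtain ⟨x, hx⟩ := himp
    have hxfr : x ∈ frontier Ω := hch.2.2.2 hx
    obtain ⟨C, ρ, hCo, hCc, hCsub, hCnest, hCcl, hρpos, hρle, hCball, hCneq, hsd⟩ :=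
      pe_tower hΩo hΩc.isPreconnected hxfr hω (hfc x hxfr) E (fun k => (hch.1 k).2.2.1)
        hch.2.1 (fun k => Set.mem_iInter.mp hx k)
    have hR := hfrd x hxfr
    have hdiv : Divides C E := pe_tower_divides hR hch hCc hCsub hCcl hCball hρle
    have himpC : (⋂ n, closure (C n)) = {x} :=
      pe_impression_eq hR hCball hρle
        (fun n => closure_mono Set.inter_subset_left (hCcl n 0))
    have hchC : IsChainIn Ω C :=
      pe_tower_isChain hΩbd hxfr hCc hCsub hCnest
        (fun n => closure_mono Set.inter_subset_left (hCcl n 0)) hCneq hsd himpC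
    have hequiv := hE.2 C hchC hdiv
    refine ⟨x, Set.Subset.antisymm ?_ (by simpa using hx)⟩
    intro z hz
    rw [← himpC]
    rw [Set.mem_iInter]
    intro k
    obtain ⟨l, hl⟩ := hequiv.2 k
    exact closure_mono hl (Set.mem_iInter.mp hz l)
  · -- accessibility and prime chain for each boundary point
    intro x hxfr
    have hR := hfrd x hxfr
    obtain ⟨C, ρ, hCo, hCc, hCsub, hCnest, hCcl, hρpos, hρle, hCball, hCneq, hsd⟩ :=
      pe_tower hΩo hΩc.isPreconnected hxfr hω (hfc x hxfr) (fun _ => Ω)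
        (fun _ => Set.Subset.rfl) (fun _ => Set.Subset.rfl) (fun _ => hxfr.1)
    have himpC : (⋂ n, closure (C n)) = {x} :=
      pe_impression_eq hR hCball hρle
        (fun n => closure_mono Set.inter_subset_left (hCcl n 0))
    have hchC : IsChainIn Ω C :=
      pe_tower_isChain hΩbd hxfr hCc hCsub hCnest
        (fun n => closure_mono Set.inter_subset_left (hCcl n 0)) hCneq hsd himpC
    refine ⟨pe_accessible hR hCo hCc hCsub hCnest hCball hρle, C, ?_, himpC⟩
    exact pe_prime_of_small hchC x ρ hCball (fun δ hδ => pe_small_index hR hδ ρ hρle)
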